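/- Let j = exp(2πi/3) and define ρ : Fin 2 → (Fin 2 × Fin 2 × Fin 2) → ℂ by its nonzero components ρ¹₍₁₂₁₎ = 1, ρ¹₍₂₁₁₎ = j², ρ¹₍₁₁₂₎ = j, ρ²₍₂₁₂₎ = 1, ρ²₍₁₂₂₎ = j², ρ²₍₂₂₁₎ = j, all other components being zero. Suppose S, U ∈ M₂(ℂ) satisfy the covariance condition: for all α' and all A, B, C, Σ_β S^{α'}_β · ρ^β_{ABC} = Σ_{A',B',C'} U^{A'}_A · U^{B'}_B · U^{C'}_C · ρ^{α'}_{A'B'C'}. Then S^{1}_1 = U^{1}_1·det U, S^{2}_1 = −U^{2}_1·det U, S^{1}_2 = −U^{1}_2·det U, S^{2}_2 = U^{2}_2·det U. -/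

import Mathlib

open BigOperators Matrix

/-- The primitive cube root of unity `j = exp(2πi/3)`. -/
noncomputable def jRoot : ℂ := Complex.exp (2 * Real.pi * Complex.I / 3)

/-- The `j`-skew-invariant trilinear forms `ρ^α_{ABC}` on two generators
(indices 1,2 rendered as `0,1 : Fin 2`), with nonzero components
`ρ¹₍₁₂₁₎ = 1`, `ρ¹₍₂₁₁₎ = j²`, `ρ¹₍₁₁₂₎ = j`,
`ρ²₍₂₁₂₎ = 1`, `ρ²₍₁₂₂₎ = j²`, `ρ²₍₂₂₁₎ = j`. -/
noncomputable def ρform : Fin 2 → Fin 2 → Fin 2 → Fin 2 → ℂ := fun α A B C =>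
  if (α, A, B, C) = (0, 0, 1, 0) then 1
  else if (α, A, B, C) = (0, 1, 0, 0) then jRoot ^ 2
  else if (α, A, B, C) = (0, 0, 0, 1) then jRoot
  else if (α, A, B, C) = (1, 1, 0, 1) then 1
  else if (α, A, B, C) = (1, 0, 1, 1) then jRoot ^ 2
  else if (α, A, B, C) = (1, 1, 1, 0) then jRoot
  else 0

/-- The covariance condition for simultaneous change of basis by `S` (on the
`Z₂`-graded generators) and `U` (on the `Z₃`-graded generators). -/
def RhoCovariant (S U : Matrix (Fin 2) (Fin 2) ℂ) : Prop :=
  ∀ α' A B C, ∑ β, S α' β * ρform β A B C =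
    ∑ A', ∑ B', ∑ C', U A' A * U B' B * U C' C * ρform α' A' B' C'

lemma jRoot_cube : jRoot ^ 3 = 1 := by
  have := Complex.isPrimitiveRoot_exp 3 (by norm_num)
  simpa [jRoot] using this.pow_eq_one

lemma jRoot_ne_one : jRoot ≠ 1 := by
  have := Complex.isPrimitiveRoot_exp 3 (by norm_num)
  have h1 := this.pow_ne_one_of_pos_of_lt (l := 1) one_ne_zero (by norm_num)
  simpa [jRoot] using h1

lemma jRoot_sum : 1 + jRoot + jRoot ^ 2 = 0 := by
  have h : (jRoot - 1) * (1 + jRoot + jRoot ^ 2) = 0 := by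
    have := jRoot_cube
    ring_nf
    linear_combination this
  rcases mul_eq_zero.mp h with h' | h'
  · exact absurd (sub_eq_zero.mp h') jRoot_ne_one
  · exact h'

/-- If `S` and `U` satisfy the covariance condition for the `ρ`-forms, then
the entries of `S` are determined by those of `U` and `det U`:
`S¹₁ = U¹₁·det U`, `S²₁ = −U²₁·det U`, `S¹₂ = −U¹₂·det U`, `S²₂ = U²₂·det U`. -/
theorem covariance_entries (S U : Matrix (Fin 2) (Fin 2) ℂ) (h : RhoCovariant S U) :
    S 0 0 = U 0 0 * U.det ∧ S 1 0 = -(U 1 0 * U.det) ∧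
    S 0 1 = -(U 0 1 * U.det) ∧ S 1 1 = U 1 1 * U.det := by
  
  have hsum := jRoot_sum
  have h1 := h 0 0 1 0
  have h2 := h 1 0 1 0
  have h3 := h 0 1 0 1
  have h4 := h 1 1 0 1
  simp only [ρform, Fin.sum_univ_two, Matrix.det_fin_two] at h1 h2 h3 h4 ⊢
  norm_num [Prod.ext_iff] at h1 h2 h3 h4
  refine ⟨?_, ?_, ?_, ?_⟩
  · linear_combination h1 + U 0 0 * U 0 1 * U 1 0 * hsum
  · linear_combination h2 + U 1 0 * U 0 0 * U 1 1 * hsum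
  · linear_combination h3 + U 0 1 * U 0 0 * U 1 1 * hsum
  · linear_combination h4 + U 0 1 * U 1 0 * U 1 1 * hsum
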